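/- arXiv:1012.2898 — 3 statements merged into one kernel-verified Lean document; each statement's English description precedes it below -/
import Mathlib

section
/- Let 𝔊 be a self-adjoint Lie subalgebra of M(n,ℝ) whose center is trivial. Then 𝔊 is semisimple, i.e. its Killing form is nondegenerate. Moreover the Killing form is negative definite on 𝔎 = {X ∈ 𝔊 : Xᵀ = −X}, positive definite on 𝔓 = {X ∈ 𝔊 : Xᵀ = X}, and B(𝔎,𝔓) = {0}. -/
open Matrix Filter Topology

attribute [local instance 100] LieRing.ofAssociativeRing

noncomputable section

/-- The space M(n,ℝ) of n × n real matrices. -/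
abbrev Mat (n : ℕ) := Matrix (Fin n) (Fin n) ℝ

/-- ℝⁿ with its standard (Euclidean) inner product. -/
abbrev Euc (n : ℕ) := EuclideanSpace ℝ (Fin n)

/-- The action of a matrix on Euclidean space. -/
def act {n : ℕ} (X : Mat n) (v : Euc n) : Euc n := Matrix.toEuclideanLin X v

/-- The matrix exponential. -/
def mexp {n : ℕ} (X : Mat n) : Mat n := NormedSpace.exp X

/-- The canonical inner product ⟨A,B⟩ = trace (A Bᵀ) on M(n,ℝ). -/
def minner {n : ℕ} (A B : Mat n) : ℝ := Matrix.trace (A * Bᵀ)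

/-- The norm associated to the canonical inner product on M(n,ℝ). -/
def mnorm {n : ℕ} (A : Mat n) : ℝ := Real.sqrt (minner A A)

/-- The Lie algebra 𝔊 of a subgroup G of GL(n,ℝ):
𝔊 = {X ∈ M(n,ℝ) : exp(tX) ∈ G for all t ∈ ℝ}. -/
def lieAlgOf {n : ℕ} (G : Subgroup (GL (Fin n) ℝ)) : Set (Mat n) :=
  {X | ∀ t : ℝ, ∃ g ∈ G, (g : Mat n) = mexp (t • X)}

/-- G is self-adjoint: gᵀ ∈ G whenever g ∈ G. -/
def IsSelfAdjointSubgroup {n : ℕ} (G : Subgroup (GL (Fin n) ℝ)) : Prop :=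
  ∀ g ∈ G, ∃ h ∈ G, (h : Mat n) = (g : Mat n)ᵀ

/-- 𝔎 : the set of skew-symmetric elements of the Lie algebra of G. -/
def kSet {n : ℕ} (G : Subgroup (GL (Fin n) ℝ)) : Set (Mat n) :=
  {X ∈ lieAlgOf G | Xᵀ = -X}

/-- 𝔊_v : the stabilizer subalgebra {X ∈ 𝔊 : X(v) = 0}. -/
def stabAlg {n : ℕ} (G : Subgroup (GL (Fin n) ℝ)) (v : Euc n) : Set (Mat n) :=
  {X ∈ lieAlgOf G | act X v = 0}

/-- 𝔓̃_v : the orthogonal complement of 𝔎 + 𝔊_v in 𝔊 w.r.t. the canonical inner product. -/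
def tildeP {n : ℕ} (G : Subgroup (GL (Fin n) ℝ)) (v : Euc n) : Set (Mat n) :=
  {X ∈ lieAlgOf G | ∀ Y : Mat n, (Y ∈ kSet G ∨ Y ∈ stabAlg G v) → minner X Y = 0}

/-- `v` has a nonzero component in the μ-eigenspace of X. -/
def hasComp {n : ℕ} (X : Mat n) (v : Euc n) (μ : ℝ) : Prop :=
  (Module.End.eigenspace (Matrix.toEuclideanLin X) μ).orthogonalProjectionOnto v ≠ 0

/-- λ_X(v) : the largest eigenvalue μ of X such that v has a nonzero component
in the μ-eigenspace of X. -/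
def lambdaOf {n : ℕ} (X : Mat n) (v : Euc n) : ℝ := sSup {μ : ℝ | hasComp X v μ}

/-- μ_X(v) : the smallest eigenvalue μ of X such that v has a nonzero component
in the μ-eigenspace of X. -/
def muOf {n : ℕ} (X : Mat n) (v : Euc n) : ℝ := sInf {μ : ℝ | hasComp X v μ}

/-- λ⁻(v) = inf {λ_X(v) : X ∈ 𝔓̃_v, |X| = 1}. -/
def lamMinus {n : ℕ} (G : Subgroup (GL (Fin n) ℝ)) (v : Euc n) : ℝ :=
  sInf {r : ℝ | ∃ X ∈ tildeP G v, mnorm X = 1 ∧ r = lambdaOf X v}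

/-- λ⁺(v) = sup {λ_X(v) : X ∈ 𝔓̃_v, |X| = 1}. -/
def lamPlus {n : ℕ} (G : Subgroup (GL (Fin n) ℝ)) (v : Euc n) : ℝ :=
  sSup {r : ℝ | ∃ X ∈ tildeP G v, mnorm X = 1 ∧ r = lambdaOf X v}

/-- The orbit G(v). -/
def orbitOf {n : ℕ} (G : Subgroup (GL (Fin n) ℝ)) (v : Euc n) : Set (Euc n) :=
  {w | ∃ g ∈ G, w = act (g : Mat n) v}

/-- v is a minimal vector for G : |g(v)| ≥ |v| for all g ∈ G. -/
def IsMinimalVec {n : ℕ} (G : Subgroup (GL (Fin n) ℝ)) (v : Euc n) : Prop :=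
  ∀ g ∈ G, ‖v‖ ≤ ‖act (g : Mat n) v‖

open scoped RealInnerProductSpace

/-- Frobenius inner product core on a Lie subalgebra of matrices. -/
def gCore {n : ℕ} (𝔊 : LieSubalgebra ℝ (Mat n)) : InnerProductSpace.Core ℝ 𝔊 where
  inner A B := Matrix.trace ((A : Mat n) * (B : Mat n)ᵀ)
  conj_inner_symm A B := by
    simp only [starRingEnd_apply, star_trivial]
    rw [Matrix.trace_mul_comm]
    rw [← Matrix.trace_transpose, transpose_mul, transpose_transpose, Matrix.trace_mul_comm]
  re_inner_nonneg A := by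
    simp only [RCLike.re_to_real]
    have : Matrix.trace ((A : Mat n) * (A : Mat n)ᵀ) = ∑ i, ∑ j, ((A : Mat n) i j)^2 := by
      simp [Matrix.trace, Matrix.diag, Matrix.mul_apply, sq]
    rw [this]
    positivity
  definite A h := by
    have h2 : ∑ i, ∑ j, ((A : Mat n) i j)^2 = 0 := by
      rw [← h]; simp [Matrix.trace, Matrix.diag, Matrix.mul_apply, sq]
    have hz : ∀ i ∈ Finset.univ, ∀ j ∈ Finset.univ, ((A : Mat n) i j)^2 = 0 := by
      intro i _ j _
      have h3 := (Finset.sum_eq_zero_iff_of_nonneg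
        (fun i _ => Finset.sum_nonneg fun j _ => sq_nonneg _)).mp h2 i (Finset.mem_univ i)
      exact (Finset.sum_eq_zero_iff_of_nonneg (fun j _ => sq_nonneg _)).mp h3 j (Finset.mem_univ j)
    apply Subtype.ext
    ext i j
    exact pow_eq_zero_iff (n := 2) (by norm_num) |>.mp (hz i (Finset.mem_univ i) j (Finset.mem_univ j))
  add_left A B C := by
    push_cast [Matrix.add_mul]
    exact Matrix.trace_add _ _
  smul_left A B r := by
    simp only [starRingEnd_apply, star_trivial]
    have : ((r • A : 𝔊) : Mat n) = r • (A : Mat n) := rfl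
    rw [this, Matrix.smul_mul, Matrix.trace_smul, smul_eq_mul]

lemma trace_eq_sum_inner' {E : Type*} [NormedAddCommGroup E] [InnerProductSpace ℝ E]
    {ι : Type*} [Fintype ι] [DecidableEq ι] (b : OrthonormalBasis ι ℝ E) (h : E →ₗ[ℝ] E) :
    LinearMap.trace ℝ E h = ∑ i, ⟪b i, h (b i)⟫ := by
  rw [LinearMap.trace_eq_matrix_trace ℝ b.toBasis, Matrix.trace]
  congr 1
  ext i
  rw [Matrix.diag, LinearMap.toMatrix_apply, b.coe_toBasis_repr_apply, b.repr_apply_apply,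
    OrthonormalBasis.coe_toBasis]

/-- A self-adjoint Lie subalgebra 𝔊 of M(n,ℝ) with trivial center is
semisimple (its Killing form B is nondegenerate); moreover B is negative definite on
𝔎 = {X ∈ 𝔊 : Xᵀ = -X}, positive definite on 𝔓 = {X ∈ 𝔊 : Xᵀ = X}, and B(𝔎,𝔓) = 0. -/
theorem stmt1 {n : ℕ} (𝔊 : LieSubalgebra ℝ (Mat n))
    (hsa : ∀ X ∈ 𝔊, Xᵀ ∈ 𝔊)
    (hcenter : ∀ X ∈ 𝔊, (∀ Y ∈ 𝔊, ⁅X, Y⁆ = 0) → X = 0) :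
    (killingForm ℝ 𝔊).Nondegenerate
    ∧ (∀ X : 𝔊, (X : Mat n)ᵀ = -(X : Mat n) → X ≠ 0 → killingForm ℝ 𝔊 X X < 0)
    ∧ (∀ X : 𝔊, (X : Mat n)ᵀ = (X : Mat n) → X ≠ 0 → 0 < killingForm ℝ 𝔊 X X)
    ∧ (∀ X Y : 𝔊, (X : Mat n)ᵀ = -(X : Mat n) → (Y : Mat n)ᵀ = (Y : Mat n) →
        killingForm ℝ 𝔊 X Y = 0) := by
  classical
  letI : NormedAddCommGroup 𝔊 := (gCore 𝔊).toNormedAddCommGroup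
  letI : InnerProductSpace ℝ 𝔊 := InnerProductSpace.ofCore (gCore 𝔊).toCore
  haveI : FiniteDimensional ℝ 𝔊 := inferInstance
  set b := stdOrthonormalBasis ℝ 𝔊 with hbdef
  let θ : 𝔊 → 𝔊 := fun X => ⟨(X : Mat n)ᵀ, hsa _ X.2⟩
  have hip : ∀ A B : 𝔊, ⟪A, B⟫ = Matrix.trace ((A : Mat n) * (B : Mat n)ᵀ) := fun _ _ => rfl
  have hbr : ∀ X Y : 𝔊, ((⁅X, Y⁆ : 𝔊) : Mat n)
      = (X : Mat n) * (Y : Mat n) - (Y : Mat n) * (X : Mat n) := by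
    intro X Y
    rw [LieSubalgebra.coe_bracket, Ring.lie_def]
  have hadj : ∀ X : 𝔊, LinearMap.adjoint (LieAlgebra.ad ℝ 𝔊 X : 𝔊 →ₗ[ℝ] 𝔊)
      = (LieAlgebra.ad ℝ 𝔊 (θ X) : 𝔊 →ₗ[ℝ] 𝔊) := by
    intro X
    symm
    rw [LinearMap.eq_adjoint_iff]
    intro A B
    simp only [LieAlgebra.ad_apply]
    rw [hip, hip, hbr, hbr]
    have hθ : ((θ X : 𝔊) : Mat n) = (X : Mat n)ᵀ := rfl
    rw [hθ, transpose_sub, transpose_mul, transpose_mul]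
    simp only [Matrix.sub_mul, Matrix.mul_sub, Matrix.trace_sub, Matrix.mul_assoc]
    congr 1
    rw [Matrix.trace_mul_comm, Matrix.mul_assoc]
  have key : ∀ X Y : 𝔊, killingForm ℝ 𝔊 X Y
      = ∑ i, ⟪(LieAlgebra.ad ℝ 𝔊 (θ X) : 𝔊 →ₗ[ℝ] 𝔊) (b i),
              (LieAlgebra.ad ℝ 𝔊 Y : 𝔊 →ₗ[ℝ] 𝔊) (b i)⟫ := by
    intro X Y
    rw [killingForm_apply_apply, trace_eq_sum_inner' b]
    congr 1
    ext i
    rw [LinearMap.comp_apply, ← hadj X, LinearMap.adjoint_inner_left]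
  have hadzero : ∀ X : 𝔊, (∀ i, (LieAlgebra.ad ℝ 𝔊 X : 𝔊 →ₗ[ℝ] 𝔊) (b i) = 0) → X = 0 := by
    intro X hX
    have had : (LieAlgebra.ad ℝ 𝔊 X : 𝔊 →ₗ[ℝ] 𝔊) = 0 := by
      apply b.toBasis.ext
      intro i
      simpa [OrthonormalBasis.coe_toBasis] using hX i
    have hc : (X : Mat n) = 0 := by
      apply hcenter _ X.2
      intro Y hY
      have h0 : (⁅X, (⟨Y, hY⟩ : 𝔊)⁆ : 𝔊) = 0 := by
        have := congrArg (fun f => f (⟨Y, hY⟩ : 𝔊)) had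
        simpa [LieAlgebra.ad_apply] using this
      have h1 : ((⁅X, (⟨Y, hY⟩ : 𝔊)⁆ : 𝔊) : Mat n) = 0 := by rw [h0]; rfl
      have h2 := hbr X ⟨Y, hY⟩
      rw [h1] at h2
      rw [Ring.lie_def]
      exact h2.symm
    exact Subtype.ext hc
  have hsumzero : ∀ X : 𝔊,
      (∑ i, ⟪(LieAlgebra.ad ℝ 𝔊 X : 𝔊 →ₗ[ℝ] 𝔊) (b i),
             (LieAlgebra.ad ℝ 𝔊 X : 𝔊 →ₗ[ℝ] 𝔊) (b i)⟫) = 0 → X = 0 := by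
    intro X hX
    apply hadzero
    intro i
    have := (Finset.sum_eq_zero_iff_of_nonneg
      (fun i _ => real_inner_self_nonneg)).mp hX i (Finset.mem_univ i)
    exact inner_self_eq_zero.mp this
  have hsumpos : ∀ X : 𝔊, X ≠ 0 →
      0 < ∑ i, ⟪(LieAlgebra.ad ℝ 𝔊 X : 𝔊 →ₗ[ℝ] 𝔊) (b i),
                (LieAlgebra.ad ℝ 𝔊 X : 𝔊 →ₗ[ℝ] 𝔊) (b i)⟫ := by
    intro X hX
    have hnn : (0:ℝ) ≤ ∑ i, ⟪(LieAlgebra.ad ℝ 𝔊 X : 𝔊 →ₗ[ℝ] 𝔊) (b i),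
        (LieAlgebra.ad ℝ 𝔊 X : 𝔊 →ₗ[ℝ] 𝔊) (b i)⟫ :=
      Finset.sum_nonneg fun i _ => real_inner_self_nonneg
    rcases hnn.lt_or_eq with h | h
    · exact h
    · exact absurd (hsumzero X h.symm) hX
  -- θ computations
  have hθneg : ∀ X : 𝔊, (X : Mat n)ᵀ = -(X : Mat n) → θ X = -X := by
    intro X hX
    apply Subtype.ext
    have h1 : ((θ X : 𝔊) : Mat n) = (X : Mat n)ᵀ := rfl
    rw [h1, hX]
    simp
  have hθpos : ∀ X : 𝔊, (X : Mat n)ᵀ = (X : Mat n) → θ X = X := by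
    intro X hX
    exact Subtype.ext hX
  -- negative definite on skew
  have hneg : ∀ X : 𝔊, (X : Mat n)ᵀ = -(X : Mat n) → X ≠ 0 → killingForm ℝ 𝔊 X X < 0 := by
    intro X hX hX0
    rw [key, hθneg X hX]
    have : ∀ i, ⟪(LieAlgebra.ad ℝ 𝔊 (-X) : 𝔊 →ₗ[ℝ] 𝔊) (b i),
        (LieAlgebra.ad ℝ 𝔊 X : 𝔊 →ₗ[ℝ] 𝔊) (b i)⟫
        = -⟪(LieAlgebra.ad ℝ 𝔊 X : 𝔊 →ₗ[ℝ] 𝔊) (b i),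
            (LieAlgebra.ad ℝ 𝔊 X : 𝔊 →ₗ[ℝ] 𝔊) (b i)⟫ := by
      intro i
      have hni : (LieAlgebra.ad ℝ 𝔊 (-X) : 𝔊 →ₗ[ℝ] 𝔊) (b i)
          = -((LieAlgebra.ad ℝ 𝔊 X : 𝔊 →ₗ[ℝ] 𝔊) (b i)) := by
        simp only [LieAlgebra.ad_apply, neg_lie]
      rw [hni, inner_neg_left]
    rw [Finset.sum_congr rfl (fun i _ => this i), Finset.sum_neg_distrib]
    simpa using hsumpos X hX0
  -- positive definite on symmetric
  have hpos : ∀ X : 𝔊, (X : Mat n)ᵀ = (X : Mat n) → X ≠ 0 → 0 < killingForm ℝ 𝔊 X X := by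
    intro X hX hX0
    rw [key, hθpos X hX]
    exact hsumpos X hX0
  -- orthogonality
  have horth : ∀ X Y : 𝔊, (X : Mat n)ᵀ = -(X : Mat n) → (Y : Mat n)ᵀ = (Y : Mat n) →
      killingForm ℝ 𝔊 X Y = 0 := by
    intro X Y hX hY
    have h1 : killingForm ℝ 𝔊 X Y
        = -∑ i, ⟪(LieAlgebra.ad ℝ 𝔊 X : 𝔊 →ₗ[ℝ] 𝔊) (b i),
                 (LieAlgebra.ad ℝ 𝔊 Y : 𝔊 →ₗ[ℝ] 𝔊) (b i)⟫ := by
      rw [key, hθneg X hX, ← Finset.sum_neg_distrib]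
      congr 1
      ext i
      have hni : (LieAlgebra.ad ℝ 𝔊 (-X) : 𝔊 →ₗ[ℝ] 𝔊) (b i)
          = -((LieAlgebra.ad ℝ 𝔊 X : 𝔊 →ₗ[ℝ] 𝔊) (b i)) := by
        simp only [LieAlgebra.ad_apply, neg_lie]
      rw [hni, inner_neg_left]
    have h2 : killingForm ℝ 𝔊 Y X
        = ∑ i, ⟪(LieAlgebra.ad ℝ 𝔊 X : 𝔊 →ₗ[ℝ] 𝔊) (b i),
                (LieAlgebra.ad ℝ 𝔊 Y : 𝔊 →ₗ[ℝ] 𝔊) (b i)⟫ := by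
      rw [key, hθpos Y hY]
      exact Finset.sum_congr rfl (fun i _ => real_inner_comm _ _)
    have h3 : killingForm ℝ 𝔊 X Y = killingForm ℝ 𝔊 Y X :=
      LieModule.traceForm_comm ℝ 𝔊 𝔊 X Y
    rw [h1] at h3
    rw [h2] at h3
    have : killingForm ℝ 𝔊 X Y = 0 := by
      rw [h1]
      linarith [h3]
    exact this
  refine ⟨?_, hneg, hpos, horth⟩
  -- nondegeneracy
  refine (LieModule.traceForm_isSymm ℝ 𝔊 𝔊).isRefl.nondegenerate_iff_separatingLeft.mpr ?_
  intro X hX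
  set K : 𝔊 := (2⁻¹ : ℝ) • (X - θ X) with hKdef
  set P : 𝔊 := (2⁻¹ : ℝ) • (X + θ X) with hPdef
  have hθcoe : ∀ Z : 𝔊, ((θ Z : 𝔊) : Mat n) = (Z : Mat n)ᵀ := fun _ => rfl
  have hKskew : (K : Mat n)ᵀ = -(K : Mat n) := by
    have hKcoe : (K : Mat n) = (2⁻¹ : ℝ) • ((X : Mat n) - (X : Mat n)ᵀ) := by
      rw [hKdef]
      push_cast [hθcoe]
      rfl
    rw [hKcoe, transpose_smul, transpose_sub, transpose_transpose]
    rw [smul_sub, smul_sub, neg_sub]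
  have hPsym : (P : Mat n)ᵀ = (P : Mat n) := by
    have hPcoe : (P : Mat n) = (2⁻¹ : ℝ) • ((X : Mat n) + (X : Mat n)ᵀ) := by
      rw [hPdef]
      push_cast [hθcoe]
      rfl
    rw [hPcoe, transpose_smul, transpose_add, transpose_transpose, add_comm]
  have hXKP : X = K + P := by
    rw [hKdef, hPdef, ← smul_add]
    have : (X - θ X) + (X + θ X) = (2 : ℝ) • X := by
      rw [two_smul]
      abel
    rw [this, smul_smul]
    norm_num
  have hKzero : K = 0 := by
    have h1 : killingForm ℝ 𝔊 X K = 0 := hX K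
    have h2 : killingForm ℝ 𝔊 X K = killingForm ℝ 𝔊 K K + killingForm ℝ 𝔊 P K := by
      rw [hXKP, map_add, LinearMap.add_apply]
    have h3 : killingForm ℝ 𝔊 P K = 0 := by
      rw [LieModule.traceForm_comm ℝ 𝔊 𝔊 P K]
      exact horth K P hKskew hPsym
    have h4 : killingForm ℝ 𝔊 K K = 0 := by linarith [h1, h2.symm, h3]
    by_contra hK0
    exact absurd h4 (ne_of_lt (hneg K hKskew hK0))
  have hPzero : P = 0 := by
    have h1 : killingForm ℝ 𝔊 X P = 0 := hX P
    have h2 : killingForm ℝ 𝔊 X P = killingForm ℝ 𝔊 K P + killingForm ℝ 𝔊 P P := by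
      rw [hXKP, map_add, LinearMap.add_apply]
    have h3 : killingForm ℝ 𝔊 K P = 0 := horth K P hKskew hPsym
    have h4 : killingForm ℝ 𝔊 P P = 0 := by linarith [h1, h2.symm, h3]
    by_contra hP0
    exact absurd h4 (ne_of_gt (hpos P hPsym hP0))
  rw [hXKP, hKzero, hPzero, add_zero]


end
end

section
/- Let 𝔊 be a self-adjoint Lie subalgebra of M(n,ℝ) that acts irreducibly on ℝⁿ, and let Z(𝔊) denote its center. Let 𝔎 = {X ∈ 𝔊 : Xᵀ = −X} and 𝔓 = {X ∈ 𝔊 : Xᵀ = X}. Then: (1) Z(𝔊) = (Z(𝔊) ∩ 𝔓) ⊕ (Z(𝔊) ∩ 𝔎); (2) if Z(𝔊) ∩ 𝔓 ≠ {0}, then Z(𝔊) ∩ 𝔓 = ℝ·Id; (3) if Z(𝔊) ∩ 𝔎 ≠ {0}, then Z(𝔊) ∩ 𝔎 = ℝ·J for some matrix J with J² = −Id. -/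
open Matrix Filter Topology

noncomputable section

attribute [local instance 100] LieRing.ofAssociativeRing

lemma toE_mul {n : ℕ} (A B : Mat n) (v : Euc n) :
    Matrix.toEuclideanLin A (Matrix.toEuclideanLin B v) = Matrix.toEuclideanLin (A * B) v := by
  simp [Matrix.toEuclideanLin_apply, Matrix.mulVec_mulVec]

lemma aux_scalar {n : ℕ} (𝔊 : LieSubalgebra ℝ (Mat n))
    (hirr : ∀ W : Submodule ℝ (Euc n), (∀ X ∈ 𝔊, ∀ w ∈ W, act X w ∈ W) → W = ⊥ ∨ W = ⊤)
    (M : Mat n) (hsym : Mᵀ = M)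
    (hcomm : ∀ Y ∈ 𝔊, M * Y = Y * M) : ∃ μ : ℝ, M = μ • (1 : Mat n) := by
  rcases Nat.eq_zero_or_pos n with hn | hn
  · subst hn; exact ⟨0, Subsingleton.elim _ _⟩
  haveI : NeZero n := ⟨hn.ne'⟩
  haveI : Nontrivial (Euc n) := by infer_instance
  have hherm : M.IsHermitian := by
    ext i j
    simpa using congrFun (congrFun hsym i) j
  have hT : (Matrix.toEuclideanLin M).IsSymmetric :=
    Matrix.isHermitian_iff_isSymmetric.1 hherm
  obtain ⟨μ, hev⟩ : ∃ μ : ℝ, Module.End.HasEigenvalue (Matrix.toEuclideanLin M) μ :=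
    ⟨_, hT.hasEigenvalue_iSup_of_finiteDimensional⟩
  set E := Module.End.eigenspace (Matrix.toEuclideanLin M) μ with hE
  have hinv : ∀ X ∈ 𝔊, ∀ w ∈ E, act X w ∈ E := by
    intro X hX w hw
    rw [Module.End.mem_eigenspace_iff] at hw ⊢
    show Matrix.toEuclideanLin M (Matrix.toEuclideanLin X w) = _
    rw [toE_mul, hcomm X hX, ← toE_mul, hw, _root_.map_smul]; rfl
  rcases hirr E hinv with h | h
  · exact absurd h hev
  · refine ⟨μ, Matrix.toEuclideanLin.injective ?_⟩
    ext v : 1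
    have hv : v ∈ E := h ▸ Submodule.mem_top
    rw [Module.End.mem_eigenspace_iff] at hv
    rw [hv]
    simp [Matrix.toEuclideanLin_apply, Matrix.smul_mulVec]

/-- Let 𝔊 be a self-adjoint Lie subalgebra of M(n,ℝ) acting irreducibly on ℝⁿ,
with center Z(𝔊), 𝔎 = {X ∈ 𝔊 : Xᵀ = -X} and 𝔓 = {X ∈ 𝔊 : Xᵀ = X}. Then
(1) Z(𝔊) = (Z(𝔊) ∩ 𝔓) ⊕ (Z(𝔊) ∩ 𝔎);
(2) if Z(𝔊) ∩ 𝔓 ≠ {0} then Z(𝔊) ∩ 𝔓 = ℝ·Id;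
(3) if Z(𝔊) ∩ 𝔎 ≠ {0} then Z(𝔊) ∩ 𝔎 = ℝ·J for some J with J² = -Id. -/
theorem stmt2 {n : ℕ} (𝔊 : LieSubalgebra ℝ (Mat n))
    (hsa : ∀ X ∈ 𝔊, Xᵀ ∈ 𝔊)
    (hirr : ∀ W : Submodule ℝ (Euc n), (∀ X ∈ 𝔊, ∀ w ∈ W, act X w ∈ W) → W = ⊥ ∨ W = ⊤)
    (Z : Set (Mat n))
    (hZ : Z = {X : Mat n | X ∈ 𝔊 ∧ ∀ Y ∈ 𝔊, ⁅X, Y⁆ = 0}) :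
    (∀ X ∈ Z, ∃! p : Mat n × Mat n,
        (p.1 ∈ Z ∧ p.1ᵀ = p.1) ∧ (p.2 ∈ Z ∧ p.2ᵀ = -p.2) ∧ X = p.1 + p.2)
    ∧ ({X : Mat n | X ∈ Z ∧ Xᵀ = X} ≠ {0} →
        {X : Mat n | X ∈ Z ∧ Xᵀ = X} = {X : Mat n | ∃ c : ℝ, X = c • (1 : Mat n)})
    ∧ ({X : Mat n | X ∈ Z ∧ Xᵀ = -X} ≠ {0} →
        ∃ J : Mat n, J * J = -1 ∧
          {X : Mat n | X ∈ Z ∧ Xᵀ = -X} = {X : Mat n | ∃ c : ℝ, X = c • J}) := by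
  subst hZ
  -- basic facts about Z
  have hmem : ∀ X : Mat n, X ∈ {X : Mat n | X ∈ 𝔊 ∧ ∀ Y ∈ 𝔊, ⁅X, Y⁆ = 0} ↔
      X ∈ 𝔊 ∧ ∀ Y ∈ 𝔊, X * Y = Y * X := by
    intro X
    simp only [Set.mem_setOf_eq, Ring.lie_def, sub_eq_zero]
  set Z : Set (Mat n) := {X : Mat n | X ∈ 𝔊 ∧ ∀ Y ∈ 𝔊, ⁅X, Y⁆ = 0} with hZdef
  have hZG : ∀ X ∈ Z, X ∈ 𝔊 := fun X hX => ((hmem X).1 hX).1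
  have hZc : ∀ X ∈ Z, ∀ Y ∈ 𝔊, X * Y = Y * X := fun X hX => ((hmem X).1 hX).2
  have hZsmul : ∀ (c : ℝ), ∀ X ∈ Z, c • X ∈ Z := by
    intro c X hX
    refine (hmem _).2 ⟨𝔊.smul_mem c (hZG X hX), fun Y hY => ?_⟩
    rw [Matrix.smul_mul, hZc X hX Y hY, Matrix.mul_smul]
  have hZadd : ∀ X ∈ Z, ∀ X' ∈ Z, X + X' ∈ Z := by
    intro X hX X' hX'
    refine (hmem _).2 ⟨𝔊.add_mem (hZG X hX) (hZG X' hX'), fun Y hY => ?_⟩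
    rw [add_mul, mul_add, hZc X hX Y hY, hZc X' hX' Y hY]
  have hZt : ∀ X ∈ Z, Xᵀ ∈ Z := by
    intro X hX
    refine (hmem _).2 ⟨hsa X (hZG X hX), fun Y hY => ?_⟩
    have h1 : X * Yᵀ = Yᵀ * X := hZc X hX Yᵀ (hsa Y hY)
    have := congrArg Matrix.transpose h1
    simpa [Matrix.transpose_mul] using this.symm
  have h0Z : (0 : Mat n) ∈ Z := (hmem _).2 ⟨𝔊.zero_mem, fun Y _ => by simp⟩
  refine ⟨?_, ?_, ?_⟩
  · -- part 1
    intro X hX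
    refine ⟨(((2:ℝ)⁻¹) • (X + Xᵀ), ((2:ℝ)⁻¹) • (X - Xᵀ)), ⟨⟨?_, ?_⟩, ⟨?_, ?_⟩, ?_⟩, ?_⟩
    · exact hZsmul _ _ (hZadd X hX Xᵀ (hZt X hX))
    · rw [Matrix.transpose_smul, Matrix.transpose_add, Matrix.transpose_transpose, add_comm]
    · have : X - Xᵀ = X + (-1 : ℝ) • Xᵀ := by module
      rw [this]
      exact hZsmul _ _ (hZadd X hX _ (hZsmul _ _ (hZt X hX)))
    · rw [Matrix.transpose_smul, Matrix.transpose_sub, Matrix.transpose_transpose,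
        ← smul_neg, neg_sub]
    · module
    · rintro ⟨S, K⟩ ⟨⟨hSZ, hSsym⟩, ⟨hKZ, hKskew⟩, hsum⟩
      have ht : Xᵀ = S - K := by
        rw [hsum, Matrix.transpose_add, hSsym, hKskew]; abel
      have h1 : X + Xᵀ = S + S := by rw [ht, hsum]; abel
      have h2 : X - Xᵀ = K + K := by rw [ht, hsum]; abel
      refine Prod.ext ?_ ?_
      · show S = (2:ℝ)⁻¹ • (X + Xᵀ); rw [h1]; module
      · show K = (2:ℝ)⁻¹ • (X - Xᵀ); rw [h2]; module
  · -- part 2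
    intro hne
    have hex : ∃ S, (S ∈ Z ∧ Sᵀ = S) ∧ S ≠ 0 := by
      by_contra h
      push_neg at h
      exact hne (Set.eq_singleton_iff_unique_mem.2
        ⟨⟨h0Z, Matrix.transpose_zero⟩, fun x hx => h x hx⟩)
    obtain ⟨S, ⟨hSZ, hSsym⟩, hSne⟩ := hex
    obtain ⟨μ, hSμ⟩ := aux_scalar 𝔊 hirr S hSsym (hZc S hSZ)
    have hμne : μ ≠ 0 := by
      rintro rfl; exact hSne (by simp [hSμ])
    ext X
    simp only [Set.mem_setOf_eq]
    constructor
    · rintro ⟨hXZ, hXsym⟩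
      exact aux_scalar 𝔊 hirr X hXsym (hZc X hXZ)
    · rintro ⟨c, rfl⟩
      have h1 : c • (1 : Mat n) = (c * μ⁻¹) • S := by
        rw [hSμ, smul_smul]; congr 1; field_simp
      rw [h1]
      exact ⟨hZsmul _ _ hSZ, by rw [Matrix.transpose_smul, hSsym]⟩
  · -- part 3
    intro hne
    have hex : ∃ K, (K ∈ Z ∧ Kᵀ = -K) ∧ K ≠ 0 := by
      by_contra h
      push_neg at h
      exact hne (Set.eq_singleton_iff_unique_mem.2
        ⟨⟨h0Z, by simp⟩, fun x hx => h x hx⟩)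
    obtain ⟨K, ⟨hKZ, hKsk⟩, hKne⟩ := hex
    have hn : 0 < n := by
      rcases Nat.eq_zero_or_pos n with h | h
      · exfalso; subst h; exact hKne (Subsingleton.elim _ _)
      · exact h
    obtain ⟨μ, hμ⟩ := aux_scalar 𝔊 hirr (K * K)
      (by rw [Matrix.transpose_mul, hKsk, neg_mul_neg])
      (by
        intro Y hY
        rw [mul_assoc, hZc K hKZ Y hY, ← mul_assoc, hZc K hKZ Y hY, mul_assoc])
    -- trace computation : μ < 0
    obtain ⟨i0, j0, hij⟩ : ∃ i j, K i j ≠ 0 := by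
      by_contra h
      push_neg at h
      exact hKne (Matrix.ext fun i j => h i j)
    have htr : Matrix.trace (K * Kᵀ) = ∑ i, ∑ j, (K i j)^2 := by
      simp [Matrix.trace, Matrix.mul_apply, sq, Matrix.diag]
    have hpos : 0 < Matrix.trace (K * Kᵀ) := by
      rw [htr]
      refine Finset.sum_pos' (fun i _ => Finset.sum_nonneg fun j _ => sq_nonneg _)
        ⟨i0, Finset.mem_univ _, Finset.sum_pos' (fun j _ => sq_nonneg _)
          ⟨j0, Finset.mem_univ _,
            lt_of_le_of_ne (sq_nonneg _) (Ne.symm (pow_ne_zero 2 hij))⟩⟩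
    have hKK : K * Kᵀ = -(K * K) := by rw [hKsk, mul_neg]
    have htrKK : Matrix.trace (K * K) = μ * n := by
      rw [hμ, Matrix.trace_smul, Matrix.trace_one]
      simp [mul_comm]
    have hμneg : μ < 0 := by
      have h2 : Matrix.trace (K * K) < 0 := by
        have := congrArg Matrix.trace hKK
        rw [Matrix.trace_neg] at this
        linarith
      rw [htrKK] at h2
      by_contra h
      push_neg at h
      nlinarith [(Nat.cast_pos (α := ℝ)).2 hn]
    have hμne : μ ≠ 0 := ne_of_lt hμneg
    set s : ℝ := Real.sqrt (-μ) with hs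
    have hs2 : s * s = -μ := Real.mul_self_sqrt (by linarith)
    have hspos : 0 < s := Real.sqrt_pos.2 (by linarith)
    refine ⟨s⁻¹ • K, ?_, ?_⟩
    · rw [Matrix.smul_mul, Matrix.mul_smul, smul_smul, hμ, smul_smul]
      have : s⁻¹ * s⁻¹ * μ = -1 := by
        field_simp
        linarith
      rw [this, neg_smul, one_smul]
    · ext X
      simp only [Set.mem_setOf_eq]
      constructor
      · rintro ⟨hXZ, hXsk⟩
        obtain ⟨c, hc⟩ := aux_scalar 𝔊 hirr (K * X)
          (by
            rw [Matrix.transpose_mul, hKsk, hXsk, neg_mul_neg]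
            exact (hZc K hKZ X (hZG X hXZ)).symm)
          (by
            intro Y hY
            rw [mul_assoc, hZc X hXZ Y hY, ← mul_assoc, hZc K hKZ Y hY, mul_assoc])
        have h1 : μ • X = c • K := by
          have h2 : K * (K * X) = c • K := by rw [hc, Matrix.mul_smul, mul_one]
          rw [← mul_assoc, hμ, Matrix.smul_mul, one_mul] at h2
          exact h2
        refine ⟨μ⁻¹ * c * s, ?_⟩
        have hX1 : X = (μ⁻¹ * c) • K := by
          have := congrArg (fun A => μ⁻¹ • A) h1
          simpa [smul_smul, inv_mul_cancel₀ hμne] using this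
        rw [hX1, smul_smul]
        congr 1
        field_simp
      · rintro ⟨c, rfl⟩
        rw [smul_smul]
        refine ⟨hZsmul _ _ hKZ, ?_⟩
        rw [Matrix.transpose_smul, hKsk, smul_neg]


end
end

section
/- Let G be a closed, connected, self-adjoint, noncompact subgroup of GL(n,ℝ), and let v ∈ ℝⁿ be a nonzero vector with G(v) unbounded. If λ⁻(v) < 0, then the zero vector lies in the closure of the orbit G(v). -/
open Matrix Filter Topology

noncomputable section

open scoped Nat
open NormedSpace RealInnerProductSpace

section Aux
variable {n : ℕ}

-- general telescoping bound
lemma pow_sub_pow_norm_le {A : Type*} [NormedRing A] [NormOneClass A] (a b : A) {M : ℝ}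
    (hM : 1 ≤ M) (ha : ‖a‖ ≤ M) (hb : ‖b‖ ≤ M) :
    ∀ k : ℕ, ‖a ^ k - b ^ k‖ ≤ (k : ℝ) * M ^ k * ‖a - b‖ := by
  intro k
  induction k with
  | zero => simp
  | succ k ih =>
    have hM0 : (0:ℝ) ≤ M := le_trans zero_le_one hM
    have key : a ^ (k+1) - b ^ (k+1) = a ^ k * (a - b) + (a ^ k - b ^ k) * b := by
      rw [pow_succ, pow_succ]; noncomm_ring
    calc ‖a ^ (k+1) - b ^ (k+1)‖
        ≤ ‖a ^ k * (a - b)‖ + ‖(a ^ k - b ^ k) * b‖ := by rw [key]; exact norm_add_le _ _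
      _ ≤ ‖a ^ k‖ * ‖a - b‖ + ‖a ^ k - b ^ k‖ * ‖b‖ :=
          add_le_add (norm_mul_le _ _) (norm_mul_le _ _)
      _ ≤ M ^ k * ‖a - b‖ + ((k : ℝ) * M ^ k * ‖a - b‖) * M := by
          have h2 : ‖a ^ k‖ ≤ M ^ k :=
            le_trans (norm_pow_le a k) (pow_le_pow_left₀ (norm_nonneg a) ha k)
          have h3 := mul_le_mul_of_nonneg_right h2 (norm_nonneg (a - b))
          have h4 := mul_le_mul ih hb (norm_nonneg b) (by positivity : (0:ℝ) ≤ (k:ℝ) * M ^ k * ‖a - b‖)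
          linarith
      _ ≤ ((k:ℝ) + 1) * M ^ (k+1) * ‖a - b‖ := by
          have h5 : M ^ k ≤ M ^ (k+1) := pow_le_pow_right₀ hM (Nat.le_succ k)
          have h6 : M ^ k * M = M ^ (k+1) := (pow_succ M k)
          calc M ^ k * ‖a - b‖ + ((k : ℝ) * M ^ k * ‖a - b‖) * M
              = M ^ k * ‖a - b‖ + (k:ℝ) * (M ^ k * M) * ‖a - b‖ := by ring
            _ = M ^ k * ‖a - b‖ + (k:ℝ) * M ^ (k+1) * ‖a - b‖ := by rw [h6]
            _ ≤ M ^ (k+1) * ‖a - b‖ + (k:ℝ) * M ^ (k+1) * ‖a - b‖ :=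
                add_le_add_left (mul_le_mul_of_nonneg_right h5 (norm_nonneg _)) _
            _ = ((k:ℝ) + 1) * M ^ (k+1) * ‖a - b‖ := by ring
      _ = ((k+1 : ℕ) : ℝ) * M ^ (k+1) * ‖a - b‖ := by push_cast; ring

end Aux

section NormedAux
variable {n : ℕ} [Nonempty (Fin n)]
attribute [local instance] Matrix.linftyOpSemiNormedRing Matrix.linftyOpNormedRing
  Matrix.linftyOpNormedAlgebra

lemma norm_mexp_le (A : Mat n) : ‖mexp A‖ ≤ Real.exp ‖A‖ := by
  have h1 : ∀ k : ℕ, ‖((k ! : ℝ)⁻¹) • A ^ k‖ ≤ ‖A‖ ^ k / (k ! : ℝ) := by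
    intro k
    rw [norm_smul, norm_inv, Real.norm_natCast, div_eq_inv_mul]
    exact mul_le_mul_of_nonneg_left (norm_pow_le A k) (by positivity)
  have h2 : Real.exp ‖A‖ = ∑' k : ℕ, ‖A‖ ^ k / (k ! : ℝ) := by
    rw [Real.exp_eq_exp_ℝ, NormedSpace.exp_eq_tsum_div]
  calc ‖mexp A‖ = ‖∑' k : ℕ, ((k ! : ℝ)⁻¹) • A ^ k‖ := by
        rw [mexp, NormedSpace.exp_eq_tsum (𝕂 := ℝ)]
    _ ≤ ∑' k : ℕ, ‖((k ! : ℝ)⁻¹) • A ^ k‖ :=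
        norm_tsum_le_tsum_norm (NormedSpace.norm_expSeries_summable' A)
    _ ≤ ∑' k : ℕ, ‖A‖ ^ k / (k ! : ℝ) :=
        Summable.tsum_le_tsum h1 (NormedSpace.norm_expSeries_summable' A)
          (Real.summable_pow_div_factorial ‖A‖)
    _ = Real.exp ‖A‖ := h2.symm

lemma trotter (P Q : Mat n) (t : ℝ) :
    Tendsto (fun k : ℕ => (mexp ((t/k) • P) * mexp ((t/k) • Q)) ^ k) atTop
      (𝓝 (mexp (t • (P + Q)))) := by
  by_cases ht : t = 0
  · subst ht
    simp only [zero_div, zero_smul]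
    rw [show mexp (0 : Mat n) = 1 from NormedSpace.exp_zero]
    simp only [one_mul, one_pow]
    exact tendsto_const_nhds
  set Z := P + Q with hZ
  set C := ‖P‖ + ‖Q‖ with hC
  have hC0 : 0 ≤ C := by positivity
  set F : ℝ → Mat n := fun s => mexp (s • P) * mexp (s • Q) - mexp (s • Z) with hF
  have hder : HasDerivAt F 0 0 := by
    have h1 := hasDerivAt_exp_smul_const (𝕂 := ℝ) P (0:ℝ)
    have h2 := hasDerivAt_exp_smul_const (𝕂 := ℝ) Q (0:ℝ)
    have h3 := hasDerivAt_exp_smul_const (𝕂 := ℝ) Z (0:ℝ)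
    have h4 := (h1.mul h2).sub h3
    simp only [zero_smul, NormedSpace.exp_zero, one_mul, mul_one] at h4
    have : P + Q - Z = 0 := by rw [hZ, sub_self]
    rw [this] at h4
    exact h4
  have hF0 : F 0 = 0 := by
    simp only [hF, zero_smul]
    rw [show mexp (0 : Mat n) = 1 from NormedSpace.exp_zero]
    simp
  have hslope : Tendsto (fun s : ℝ => ‖s‖⁻¹ * ‖F s‖) (𝓝 0) (𝓝 0) := by
    have := hasDerivAt_iff_tendsto.mp hder
    simpa [hF0] using this
  have hkey : Tendsto (fun k : ℕ => (k : ℝ) * ‖F (t / k)‖) atTop (𝓝 0) := by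
    have h5 : Tendsto (fun k : ℕ => (t / k : ℝ)) atTop (𝓝 0) :=
      tendsto_const_div_atTop_nhds_zero_nat t
    have h6 := (hslope.comp h5).const_mul |t|
    rw [mul_zero] at h6
    apply h6.congr'
    filter_upwards [eventually_ge_atTop 1] with k hk
    have hk0 : (k : ℝ) ≠ 0 := Nat.cast_ne_zero.mpr (by omega)
    have habs : ‖(t / k : ℝ)‖⁻¹ = (k : ℝ) / |t| := by
      rw [Real.norm_eq_abs, abs_div, Nat.abs_cast, inv_div]
    have ht' : |t| ≠ 0 := abs_ne_zero.mpr ht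
    rw [Function.comp_apply, habs]
    field_simp
  refine tendsto_iff_norm_sub_tendsto_zero.mpr ?_
  have hlim : Tendsto (fun k : ℕ => Real.exp (|t| * C) * ((k : ℝ) * ‖F (t / k)‖)) atTop (𝓝 0) := by
    simpa using hkey.const_mul (Real.exp (|t| * C))
  apply squeeze_zero' (Eventually.of_forall fun k => norm_nonneg _) _ hlim
  filter_upwards [eventually_ge_atTop 1] with k hk
  have hk0 : (k : ℝ) ≠ 0 := Nat.cast_ne_zero.mpr (by omega)
  set s : ℝ := t / k with hs
  set a : Mat n := mexp (s • P) * mexp (s • Q) with hA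
  set b : Mat n := mexp (s • Z) with hB
  set M : ℝ := Real.exp (|s| * C) with hM
  have hM1 : 1 ≤ M := Real.one_le_exp (by positivity)
  have hsmul : ∀ (W : Mat n), ‖s • W‖ = |s| * ‖W‖ := fun W => by
    rw [norm_smul, Real.norm_eq_abs]
  have hna : ‖a‖ ≤ M := by
    calc ‖a‖ ≤ ‖mexp (s • P)‖ * ‖mexp (s • Q)‖ := norm_mul_le _ _
      _ ≤ Real.exp ‖s • P‖ * Real.exp ‖s • Q‖ :=
          mul_le_mul (norm_mexp_le _) (norm_mexp_le _) (norm_nonneg _) (Real.exp_nonneg _)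
      _ = Real.exp (|s| * ‖P‖ + |s| * ‖Q‖) := by rw [← Real.exp_add, hsmul, hsmul]
      _ = M := by rw [hM, hC]; ring_nf
  have hnb : ‖b‖ ≤ M := by
    calc ‖b‖ ≤ Real.exp ‖s • Z‖ := norm_mexp_le _
      _ ≤ M := by
          apply Real.exp_le_exp.mpr
          rw [hsmul]
          exact mul_le_mul_of_nonneg_left (norm_add_le P Q) (abs_nonneg s)
  have hb_pow : b ^ k = mexp (t • Z) := by
    have h7 : b ^ k = mexp ((k : ℕ) • (s • Z)) := (Matrix.exp_nsmul k (s • Z)).symm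
    rw [h7, ← Nat.cast_smul_eq_nsmul ℝ, smul_smul]
    congr 1
    rw [hs]
    congr 1
    field_simp
  have hMk : M ^ k ≤ Real.exp (|t| * C) := by
    rw [hM, ← Real.exp_nat_mul]
    apply Real.exp_le_exp.mpr
    have : (k : ℝ) * (|s| * C) = ((k : ℝ) * |s|) * C := by ring
    rw [this]
    apply mul_le_mul_of_nonneg_right _ hC0
    rw [hs, abs_div, Nat.abs_cast]
    rw [mul_div_assoc']
    rw [mul_comm]
    rw [mul_div_assoc]
    rw [div_self hk0, mul_one]
  have hab : a - b = F s := rfl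
  calc ‖(mexp (s • P) * mexp (s • Q)) ^ k - mexp (t • Z)‖
      = ‖a ^ k - b ^ k‖ := by rw [hb_pow]
    _ ≤ (k : ℝ) * M ^ k * ‖a - b‖ := pow_sub_pow_norm_le a b hM1 hna hnb k
    _ ≤ (k : ℝ) * Real.exp (|t| * C) * ‖a - b‖ := by
        apply mul_le_mul_of_nonneg_right _ (norm_nonneg _)
        exact mul_le_mul_of_nonneg_left hMk (Nat.cast_nonneg k)
    _ = Real.exp (|t| * C) * ((k : ℝ) * ‖F s‖) := by rw [hab]; ring

end NormedAux


section MoreAux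
variable {n : ℕ}

lemma mexp_mul_neg_self (A : Mat n) : mexp A * mexp (-A) = 1 := by
  rw [mexp, mexp, ← Matrix.exp_add_of_commute A (-A) (Commute.neg_right (Commute.refl A)),
    add_neg_cancel]
  exact NormedSpace.exp_zero

lemma mexp_neg_mul_self (A : Mat n) : mexp (-A) * mexp A = 1 := by
  rw [mexp, mexp, ← Matrix.exp_add_of_commute (-A) A (Commute.neg_left (Commute.refl A)),
    neg_add_cancel]
  exact NormedSpace.exp_zero

lemma lieAlgOf_add (hn : 0 < n) {G : Subgroup (GL (Fin n) ℝ)}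
    (hclosed : IsClosed (G : Set (GL (Fin n) ℝ))) {X Y : Mat n}
    (hX : X ∈ lieAlgOf G) (hY : Y ∈ lieAlgOf G) : X + Y ∈ lieAlgOf G := by
  haveI : Nonempty (Fin n) := Fin.pos_iff_nonempty.mp hn
  intro t
  choose u huG huv using fun k : ℕ => hX (t / k)
  choose w hwG hwv using fun k : ℕ => hY (t / k)
  have huv' : ∀ k : ℕ, (((u k)⁻¹ : GL (Fin n) ℝ) : Mat n) = mexp (-((t/k) • X)) := fun k =>
    Units.inv_eq_of_mul_eq_one_right (by rw [huv k]; exact mexp_mul_neg_self _)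
  have hwv' : ∀ k : ℕ, (((w k)⁻¹ : GL (Fin n) ℝ) : Mat n) = mexp (-((t/k) • Y)) := fun k =>
    Units.inv_eq_of_mul_eq_one_right (by rw [hwv k]; exact mexp_mul_neg_self _)
  set g : ℕ → GL (Fin n) ℝ := fun k => (u k * w k) ^ k with hg
  have hgG : ∀ k, g k ∈ G := fun k => pow_mem (mul_mem (huG k) (hwG k)) k
  have hval : ∀ k : ℕ, ((g k : GL (Fin n) ℝ) : Mat n)
      = (mexp ((t/k) • X) * mexp ((t/k) • Y)) ^ k := by
    intro k
    rw [hg]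
    simp only [Units.val_pow_eq_pow_val, Units.val_mul]
    rw [huv k, hwv k]
  have hval' : ∀ k : ℕ, (((g k)⁻¹ : GL (Fin n) ℝ) : Mat n)
      = (mexp (((-t)/k) • Y) * mexp (((-t)/k) • X)) ^ k := by
    intro k
    rw [hg, ← inv_pow]
    rw [Units.val_pow_eq_pow_val]
    congr 1
    have harg : ∀ (W : Mat n), -((t/(k:ℝ)) • W) = ((-t)/(k:ℝ)) • W := fun W => by
      rw [neg_div, neg_smul]
    rw [_root_.mul_inv_rev, Units.val_mul, huv' k, hwv' k, harg, harg]
  have h1 : Tendsto (fun k : ℕ => ((g k : GL (Fin n) ℝ) : Mat n)) atTop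
      (𝓝 (mexp (t • (X + Y)))) :=
    (trotter X Y t).congr fun k => (hval k).symm
  have h2 : Tendsto (fun k : ℕ => (((g k)⁻¹ : GL (Fin n) ℝ) : Mat n)) atTop
      (𝓝 (mexp (-(t • (X + Y))))) := by
    have h3 := trotter Y X (-t)
    have he : (-t) • (Y + X) = -(t • (X + Y)) := by rw [add_comm Y X, neg_smul]
    rw [he] at h3
    exact h3.congr fun k => (hval' k).symm
  set E : GL (Fin n) ℝ :=
    ⟨mexp (t • (X + Y)), mexp (-(t • (X + Y))), mexp_mul_neg_self _, mexp_neg_mul_self _⟩ with hE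
  have htend : Tendsto g atTop (𝓝 E) := by
    rw [(Units.isInducing_embedProduct (M := Mat n)).tendsto_nhds_iff]
    exact h1.prodMk_nhds ((MulOpposite.continuous_op.tendsto _).comp h2)
  exact ⟨E, hclosed.mem_of_tendsto htend (Eventually.of_forall hgG), rfl⟩

end MoreAux

section EigenAux
variable {n : ℕ} [Nonempty (Fin n)]

lemma mexp_mulVec_eigen (M : Mat n) (w : Fin n → ℝ) (μ : ℝ)
    (h : M.mulVec w = μ • w) : (mexp M).mulVec w = Real.exp μ • w := by
  letI : SeminormedRing (Mat n) := Matrix.linftyOpSemiNormedRing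
  letI : NormedRing (Mat n) := Matrix.linftyOpNormedRing
  letI : NormedAlgebra ℝ (Mat n) := Matrix.linftyOpNormedAlgebra
  have hpow : ∀ k : ℕ, (M ^ k).mulVec w = (μ ^ k) • w := by
    intro k
    induction k with
    | zero => simp [Matrix.one_mulVec]
    | succ k ih =>
      rw [pow_succ, ← Matrix.mulVec_mulVec, h, Matrix.mulVec_smul, ih, smul_smul, ← pow_succ']
  let L : Mat n →ₗ[ℝ] (Fin n → ℝ) :=
    { toFun := fun A => A.mulVec w
      map_add' := fun A B => Matrix.add_mulVec A B w
      map_smul' := fun c A => Matrix.smul_mulVec c A w }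
  let L' : Mat n →L[ℝ] (Fin n → ℝ) := LinearMap.toContinuousLinearMap L
  have hsum := NormedSpace.expSeries_summable' (𝕂 := ℝ) M
  have hLsum : HasSum (fun k : ℕ => L' (((k)! : ℝ)⁻¹ • M ^ k)) (L' (mexp M)) := by
    rw [mexp, NormedSpace.exp_eq_tsum (𝕂 := ℝ)]
    exact hsum.hasSum.mapL L'
  have hscal : HasSum (fun k : ℕ => ((k)! : ℝ)⁻¹ * μ ^ k) (Real.exp μ) := by
    have h9 := (NormedSpace.expSeries_summable' (𝕂 := ℝ) μ).hasSum
    rw [Real.exp_eq_exp_ℝ, NormedSpace.exp_eq_tsum (𝕂 := ℝ)]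
    simpa [smul_eq_mul] using h9
  have hfin : HasSum (fun k : ℕ => (((k)! : ℝ)⁻¹ * μ ^ k) • w) (Real.exp μ • w) :=
    hscal.smul_const w
  have heq : ∀ k : ℕ, L' (((k)! : ℝ)⁻¹ • M ^ k) = (((k)! : ℝ)⁻¹ * μ ^ k) • w := by
    intro k
    have : L' (((k)! : ℝ)⁻¹ • M ^ k) = ((k)! : ℝ)⁻¹ • (M ^ k).mulVec w := by
      rw [_root_.map_smul]; rfl
    rw [this, hpow k, smul_smul]
  rw [funext heq] at hLsum
  have : L' (mexp M) = Real.exp μ • w := hLsum.unique hfin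
  exact this

end EigenAux

section SymAux
variable {n : ℕ}

lemma minner_self_eq_zero {A : Mat n} (h : minner A A = 0) : A = 0 := by
  have hsum : ∑ i : Fin n, ∑ j : Fin n, (A i j) ^ 2 = 0 := by
    have : minner A A = ∑ i : Fin n, ∑ j : Fin n, (A i j) ^ 2 := by
      simp [minner, Matrix.trace, Matrix.diag, Matrix.mul_apply, Matrix.transpose_apply, sq]
    rw [← this, h]
  ext i j
  have h1 := (Finset.sum_eq_zero_iff_of_nonneg
    (fun i _ => Finset.sum_nonneg fun j _ => sq_nonneg (A i j))).mp hsum i (Finset.mem_univ i)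
  have h2 := (Finset.sum_eq_zero_iff_of_nonneg
    (fun j _ => sq_nonneg (A i j))).mp h1 j (Finset.mem_univ j)
  simpa using pow_eq_zero_iff (n := 2) (by norm_num) |>.mp h2

lemma transpose_eq_of_minner (X : Mat n) (h : minner X (X - Xᵀ) = 0) : Xᵀ = X := by
  have h2 : minner (X - Xᵀ) (X - Xᵀ) = 2 * minner X (X - Xᵀ) := by
    simp only [minner, Matrix.transpose_sub, Matrix.transpose_transpose, Matrix.sub_mul,
      Matrix.mul_sub, Matrix.trace_sub]
    have e1 : Matrix.trace (Xᵀ * Xᵀ) = Matrix.trace (X * X) := by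
      rw [← Matrix.transpose_mul, Matrix.trace_transpose]
    have e2 : Matrix.trace (Xᵀ * X) = Matrix.trace (X * Xᵀ) := Matrix.trace_mul_comm _ _
    rw [e1, e2]; ring
  rw [h, mul_zero] at h2
  have h3 := minner_self_eq_zero h2
  rw [sub_eq_zero] at h3
  exact h3.symm

end SymAux

section DecayAux
variable {n : ℕ}

lemma decay (hn : 0 < n) (X : Mat n) (hsym : Xᵀ = X) (v : Euc n)
    (hlv : lambdaOf X v < 0) :
    Tendsto (fun t : ℝ => act (mexp (t • X)) v) atTop (𝓝 0) := by
  haveI : Nonempty (Fin n) := Fin.pos_iff_nonempty.mp hn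
  have hherm : X.IsHermitian := by
    rw [Matrix.IsHermitian, Matrix.conjTranspose_eq_transpose_of_trivial]
    exact hsym
  set b := hherm.eigenvectorBasis with hb
  set μ := hherm.eigenvalues with hμ
  have hsymT : (Matrix.toEuclideanLin X).IsSymmetric :=
    Matrix.isHermitian_iff_isSymmetric.mp hherm
  have hTb : ∀ j, Matrix.toEuclideanLin X (b j) = μ j • b j := by
    intro j
    have h0 := hherm.mulVec_eigenvectorBasis j
    rw [← hb, ← hμ] at h0
    rw [Matrix.toEuclideanLin_apply, h0, WithLp.toLp_smul, WithLp.toLp_ofLp]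
  -- the set of relevant eigenvalues is contained in the range of μ
  set S : Set ℝ := {μ₀ : ℝ | hasComp X v μ₀} with hS
  have hrange : S ⊆ Set.range μ := by
    intro μ₀ hμ₀
    set E := Module.End.eigenspace (Matrix.toEuclideanLin X) μ₀ with hE
    set w : Euc n := (E.orthogonalProjectionOnto v : Euc n) with hw
    have hwE : w ∈ E := SetLike.coe_mem _
    have hw0 : w ≠ 0 := by
      intro hcon
      apply hμ₀
      exact Submodule.coe_eq_zero.mp hcon
    have hTw : Matrix.toEuclideanLin X w = μ₀ • w := Module.End.mem_eigenspace_iff.mp hwE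
    have hj : ∃ j, ⟪b j, w⟫ ≠ 0 := by
      by_contra hcon
      push_neg at hcon
      apply hw0
      rw [← b.sum_repr' w]
      simp [hcon]
    obtain ⟨j, hj⟩ := hj
    have hinner : μ j * ⟪b j, w⟫ = μ₀ * ⟪b j, w⟫ := by
      have l1 : ⟪Matrix.toEuclideanLin X (b j), w⟫ = ⟪b j, Matrix.toEuclideanLin X w⟫ :=
        hsymT (b j) w
      rw [hTb j, hTw, real_inner_smul_left, real_inner_smul_right] at l1
      exact l1
    exact ⟨j, mul_right_cancel₀ hj hinner⟩
  have hbdd : BddAbove S := ((Set.finite_range μ).bddAbove).mono hrange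
  have hjneg : ∀ j, ⟪b j, v⟫ ≠ 0 → μ j < 0 := by
    intro j hj
    have hmem : μ j ∈ S := by
      show hasComp X v (μ j)
      set E := Module.End.eigenspace (Matrix.toEuclideanLin X) (μ j) with hE
      have hbE : b j ∈ E := Module.End.mem_eigenspace_iff.mpr (hTb j)
      intro h0
      apply hj
      have h1 := Submodule.sub_starProjection_mem_orthogonal (K := E) v
      have h2 : ⟪b j, v - (E.orthogonalProjectionOnto v : Euc n)⟫ = 0 :=
        (Submodule.mem_orthogonal E _).mp h1 _ hbE
      rw [inner_sub_right] at h2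
      have h3 : ((E.orthogonalProjectionOnto v : Euc n)) = 0 := by
        rw [h0]; rfl
      rw [h3, inner_zero_right, sub_zero] at h2
      exact h2
    exact lt_of_le_of_lt (le_csSup hbdd hmem) hlv
  have hmexpb : ∀ (t : ℝ) (j : Fin n),
      Matrix.toEuclideanLin (mexp (t • X)) (b j) = Real.exp (t * μ j) • b j := by
    intro t j
    have h0 := hherm.mulVec_eigenvectorBasis j
    rw [← hb, ← hμ] at h0
    have heig : (t • X).mulVec ((WithLp.equiv 2 (Fin n → ℝ)) (b j))
        = (t * μ j) • ((WithLp.equiv 2 (Fin n → ℝ)) (b j)) := by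
      change (t • X) *ᵥ (b j).ofLp = (t * μ j) • (b j).ofLp
      rw [Matrix.smul_mulVec, h0, smul_smul]
    have h1 := mexp_mulVec_eigen (t • X) _ _ heig
    rw [Matrix.toEuclideanLin_apply]
    change WithLp.toLp 2 (mexp (t • X) *ᵥ (WithLp.equiv 2 (Fin n → ℝ)) (b j)) = _
    rw [h1]
    rfl
  have hact : ∀ t : ℝ, act (mexp (t • X)) v
      = ∑ j, (⟪b j, v⟫ * Real.exp (t * μ j)) • b j := by
    intro t
    show Matrix.toEuclideanLin (mexp (t • X)) v = _
    conv_lhs => rw [← b.sum_repr' v]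
    rw [map_sum]
    refine Finset.sum_congr rfl fun j _ => ?_
    rw [_root_.map_smul, hmexpb t j, smul_smul]
  have hall : Tendsto (fun t : ℝ => ∑ j, (⟪b j, v⟫ * Real.exp (t * μ j)) • b j) atTop
      (𝓝 0) := by
    have := tendsto_finset_sum (Finset.univ : Finset (Fin n))
      (f := fun j (t : ℝ) => (⟪b j, v⟫ * Real.exp (t * μ j)) • b j)
      (x := atTop) (a := fun _ => (0 : Euc n)) ?_
    · simpa using this
    intro j _
    by_cases hj : ⟪b j, v⟫ = 0
    · simp only [hj, zero_mul, zero_smul]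
      exact tendsto_const_nhds
    · have hμj := hjneg j hj
      have h4 : Tendsto (fun t : ℝ => t * μ j) atTop atBot :=
        (tendsto_mul_const_atBot_of_neg hμj).mpr tendsto_id
      have h5 : Tendsto (fun t : ℝ => Real.exp (t * μ j)) atTop (𝓝 0) :=
        Real.tendsto_exp_atBot.comp h4
      have h6 : Tendsto (fun t : ℝ => ⟪b j, v⟫ * Real.exp (t * μ j)) atTop (𝓝 0) := by
        simpa using h5.const_mul ⟪b j, v⟫
      simpa using h6.smul_const (b j)
  exact (hall.congr fun t => (hact t).symm)

end DecayAux

/-- Let G be a closed, connected, self-adjoint, noncompact subgroup of GL(n,ℝ)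
and v ∈ ℝⁿ nonzero with G(v) unbounded. If λ⁻(v) < 0 then 0 lies in the closure of G(v). -/
theorem stmt13 {n : ℕ} (G : Subgroup (GL (Fin n) ℝ))
    (hclosed : IsClosed (G : Set (GL (Fin n) ℝ)))
    (hconn : IsConnected (G : Set (GL (Fin n) ℝ)))
    (hsa : IsSelfAdjointSubgroup G)
    (hnc : ¬ IsCompact (G : Set (GL (Fin n) ℝ)))
    (v : Euc n) (hv : v ≠ 0)
    (hunb : ¬ Bornology.IsBounded (orbitOf G v))
    (hneg : lamMinus G v < 0) :
    (0 : Euc n) ∈ closure (orbitOf G v) := by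
  -- n must be positive since v ≠ 0
  rcases Nat.eq_zero_or_pos n with hn0 | hpos
  · exfalso
    apply hv
    subst hn0
    ext i
    exact Fin.elim0 i
  haveI : Nonempty (Fin n) := Fin.pos_iff_nonempty.mp hpos
  -- extract an element X of 𝔓̃_v with λ_X(v) < 0
  obtain ⟨r, hrS, hr0⟩ : ∃ r ∈ {r : ℝ | ∃ X ∈ tildeP G v, mnorm X = 1 ∧ r = lambdaOf X v},
      r < 0 := by
    by_contra hcon
    push_neg at hcon
    have h0 : 0 ≤ lamMinus G v := Real.sInf_nonneg fun r hr => hcon r hr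
    linarith
  obtain ⟨X, hXP, hXnorm, hXr⟩ := hrS
  have hXlie : X ∈ lieAlgOf G := hXP.1
  have hlv : lambdaOf X v < 0 := hXr ▸ hr0
  -- the transpose of X lies in the Lie algebra, by self-adjointness
  have hXT : Xᵀ ∈ lieAlgOf G := by
    intro t
    obtain ⟨g, hgG, hg⟩ := hXlie t
    obtain ⟨h, hhG, hh⟩ := hsa g hgG
    refine ⟨h, hhG, ?_⟩
    rw [hh, hg, mexp, mexp, ← Matrix.exp_transpose, Matrix.transpose_smul]
  have hnXT : -Xᵀ ∈ lieAlgOf G := by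
    intro t
    obtain ⟨g, hgG, hg⟩ := hXT (-t)
    refine ⟨g, hgG, ?_⟩
    rw [hg]
    congr 1
    rw [neg_smul, smul_neg]
  -- the skew part of X lies in the Lie algebra (Lie product formula)
  have hA : X + (-Xᵀ) ∈ lieAlgOf G := lieAlgOf_add hpos hclosed hXlie hnXT
  have hAskew : (X + (-Xᵀ))ᵀ = -(X + (-Xᵀ)) := by
    rw [Matrix.transpose_add, Matrix.transpose_neg, Matrix.transpose_transpose]
    abel
  -- X is orthogonal to its own skew part, hence symmetric
  have horth : minner X (X - Xᵀ) = 0 := by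
    have := hXP.2 (X + (-Xᵀ)) (Or.inl ⟨hA, hAskew⟩)
    rwa [← sub_eq_add_neg] at this
  have hsym : Xᵀ = X := transpose_eq_of_minner X horth
  -- the one-parameter group exp(tX) shrinks v to 0
  have hdecay := decay hpos X hsym v hlv
  apply mem_closure_of_tendsto hdecay
  filter_upwards with t
  obtain ⟨g, hgG, hg⟩ := hXlie t
  exact ⟨g, hgG, by rw [hg]⟩

end
end
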